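/- The function F is twice differentiable on the open interval (0, β) and satisfies F″(τ) = ε² F(τ) for all τ ∈ (0, β); moreover lim_{τ→0⁺} F″(τ) = (ε/2) · coth(βε/2) and F″(β/2) = ε / (2 · sinh(βε/2)). -/

import Mathlib

open Filter

/-- `F` is twice differentiable on `(0, β)` and satisfies `F″ τ = ε² F τ` for
`τ ∈ (0, β)`; moreover `lim_{τ→0⁺} F″ τ = (ε/2)·coth(βε/2)` and `F″ (β/2) = ε/(2 sinh(βε/2))`. -/
theorem stmt3 (β ε : ℝ) (hβ : 0 < β) (hε : 0 < ε) (F : ℝ → ℝ)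
    (hper : Function.Periodic F β)
    (hF : ∀ τ ∈ Set.Ico (0:ℝ) β,
      F τ = (Real.exp (-τ * ε) + Real.exp ((τ - β) * ε)) / (2 * ε * (1 - Real.exp (-β * ε)))) :
    ∃ F' F'' : ℝ → ℝ,
      (∀ τ ∈ Set.Ioo (0:ℝ) β, HasDerivAt F (F' τ) τ) ∧
      (∀ τ ∈ Set.Ioo (0:ℝ) β, HasDerivAt F' (F'' τ) τ) ∧
      (∀ τ ∈ Set.Ioo (0:ℝ) β, F'' τ = ε ^ 2 * F τ) ∧
      Tendsto F'' (nhdsWithin 0 (Set.Ioi 0))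
        (nhds (ε / 2 * (Real.cosh (β * ε / 2) / Real.sinh (β * ε / 2)))) ∧
      F'' (β / 2) = ε / (2 * Real.sinh (β * ε / 2)) := by
  set c : ℝ := 2 * ε * (1 - Real.exp (-β * ε)) with hc
  set G : ℝ → ℝ := fun τ => (Real.exp (-τ * ε) + Real.exp ((τ - β) * ε)) / c with hG
  have h1 : ∀ τ : ℝ, HasDerivAt (fun t : ℝ => Real.exp (-t * ε)) (-ε * Real.exp (-τ * ε)) τ := by
    intro τ
    have := (Real.hasDerivAt_exp (-τ * ε)).comp τ (((hasDerivAt_id τ).neg).mul_const ε)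
    exact this.congr_deriv (by ring)
  have h2 : ∀ τ : ℝ, HasDerivAt (fun t : ℝ => Real.exp ((t - β) * ε)) (ε * Real.exp ((τ - β) * ε)) τ := by
    intro τ
    have := (Real.hasDerivAt_exp ((τ - β) * ε)).comp τ (((hasDerivAt_id τ).sub_const β).mul_const ε)
    exact this.congr_deriv (by ring)
  have hGd : ∀ τ : ℝ, HasDerivAt G ((-ε * Real.exp (-τ * ε) + ε * Real.exp ((τ - β) * ε)) / c) τ :=
    fun τ => ((h1 τ).add (h2 τ)).div_const c
  have hGd2 : ∀ τ : ℝ, HasDerivAt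
      (fun t => (-ε * Real.exp (-t * ε) + ε * Real.exp ((t - β) * ε)) / c) (ε ^ 2 * G τ) τ := by
    intro τ
    have := (((h1 τ).const_mul (-ε)).add ((h2 τ).const_mul ε)).div_const c
    refine this.congr_deriv ?_
    simp only [hG]; ring
  set a : ℝ := Real.exp (-(β * ε / 2)) with hA
  set b : ℝ := Real.exp (β * ε / 2) with hB
  have ha : 0 < a := Real.exp_pos _
  have hb : 0 < b := Real.exp_pos _
  have hab : b * a = 1 := by rw [hA, hB, ← Real.exp_add]; simp
  have heq : Real.exp (-β * ε) = a * a := by rw [hA, ← Real.exp_add]; ring_nf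
  have hba : a < b := by rw [hA, hB]; exact Real.exp_lt_exp.2 (by nlinarith)
  have hlt : a * a < 1 := by rw [← heq]; exact Real.exp_lt_one_iff.2 (by nlinarith)
  have hne1 : 1 - a * a ≠ 0 := by nlinarith
  have hne2 : b - a ≠ 0 := by nlinarith
  have hcosh : Real.cosh (β * ε / 2) = (b + a) / 2 := by rw [Real.cosh_eq]
  have hsinh : Real.sinh (β * ε / 2) = (b - a) / 2 := by rw [Real.sinh_eq]
  have hcval : c = 2 * ε * (1 - a * a) := by rw [hc, heq]
  refine ⟨fun τ => (-ε * Real.exp (-τ * ε) + ε * Real.exp ((τ - β) * ε)) / c,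
    fun τ => ε ^ 2 * G τ, ?_, ?_, ?_, ?_, ?_⟩
  · intro τ hτ
    refine (hGd τ).congr_of_eventuallyEq ?_
    exact Filter.eventuallyEq_of_mem (isOpen_Ioo.mem_nhds hτ)
      (fun x hx => by rw [hF x ⟨hx.1.le, hx.2⟩])
  · intro τ hτ; exact hGd2 τ
  · intro τ hτ
    rw [hF τ ⟨hτ.1.le, hτ.2⟩]
  · have hGc : Continuous G := by
      apply Continuous.div_const
      exact (Real.continuous_exp.comp (by continuity)).add
        (Real.continuous_exp.comp (by continuity))
    have hG0 : G 0 = (1 + a * a) / c := by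
      rw [hG]
      have e0 : Real.exp (-(0:ℝ) * ε) = 1 := by norm_num
      have e1 : Real.exp (((0:ℝ) - β) * ε) = a * a := by rw [← heq]; ring_nf
      simp only [e0, e1]
    have key : ε ^ 2 * G 0 = ε / 2 * (Real.cosh (β * ε / 2) / Real.sinh (β * ε / 2)) := by
      rw [hG0, hcosh, hsinh, hcval]
      have hεne := hε.ne'
      have hne1' : 1 - a ^ 2 ≠ 0 := by rw [sq]; exact hne1
      field_simp
      linear_combination (2 * a) * hab
    rw [← key]
    exact ((continuous_const.mul hGc).tendsto 0).mono_left nhdsWithin_le_nhds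
  · have hGhalf : G (β / 2) = (a + a) / c := by
      rw [hG]
      have e0 : Real.exp (-(β / 2) * ε) = a := by rw [hA]; ring_nf
      have e1 : Real.exp ((β / 2 - β) * ε) = a := by rw [hA]; ring_nf
      simp only [e0, e1]
    show ε ^ 2 * G (β / 2) = _
    rw [hGhalf, hsinh, hcval]
    have hεne := hε.ne'
    have hne1' : 1 - a ^ 2 ≠ 0 := by rw [sq]; exact hne1
    field_simp
    linear_combination 2 * hab
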